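/- arXiv:1805.09777 — 3 statements merged into one kernel-verified Lean document; each statement's English description precedes it below -/
import Mathlib

section
/- Among the 2925 three-element subsets of Σ, exactly 45 span a linear subspace of ℝ^6 of dimension at most 2, and every such three-element subset {a, b, c} satisfies a + b + c = 0. -/
set_option maxRecDepth 1000000
set_option maxHeartbeats 4000000

noncomputable section

/-- `ℝ^6` with the standard inner product. -/
abbrev E6V : Type := EuclideanSpace ℝ (Fin 6)

/-- Turn a plain function `Fin 6 → ℝ` into a vector of `E6V`. -/
def toE (f : Fin 6 → ℝ) : E6V := (WithLp.equiv 2 (Fin 6 → ℝ)).symm f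

/-- The standard basis vector `e i`. -/
def stdE (i : Fin 6) : E6V := EuclideanSpace.single i 1

/-- The set `Φ⁺` of positive roots of `E₆`: the 20 vectors `e i ± e j` for
`2 ≤ i < j ≤ 6` (zero-based: `1 ≤ i < j ≤ 5`), together with the 16 vectors
`(√3/2, ±1/2, ±1/2, ±1/2, ±1/2, ±1/2)` with an even number of minus signs. -/
def PhiPlus : Set E6V :=
  {v | ∃ i j : Fin 6, 0 < (i : ℕ) ∧ i < j ∧ (v = stdE i + stdE j ∨ v = stdE i - stdE j)} ∪
  {v | ∃ s : Fin 5 → ℝ, (∀ k, s k = 1 ∨ s k = -1) ∧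
      Even (Finset.univ.filter (fun k => s k = -1)).card ∧
      v = toE (Fin.cons (Real.sqrt 3 / 2) (fun k => s k / 2))}

/-- The set `Φ = Φ⁺ ∪ (−Φ⁺)` of all roots of `E₆`. -/
def Phi : Set E6V := PhiPlus ∪ (-PhiPlus)

/-- Orthogonal reflection in the vector `v`. -/
def reflectIn (v : E6V) (x : E6V) : E6V :=
  x - (2 * (inner ℝ x v : ℝ) / (inner ℝ v v : ℝ)) • v

/-- The minuscule weight `μ = ((2√3)/3, 0, 0, 0, 0, 0)`. -/
def muE6 : E6V := toE ![2 * Real.sqrt 3 / 3, 0, 0, 0, 0, 0]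

/-- The 27 weights of the minuscule representation of `E₆`: everything obtained
from `μ` by applying at most two root reflections. -/
def SigmaE6 : Set E6V :=
  {muE6} ∪ {x | ∃ v ∈ Phi, x = reflectIn v muE6} ∪
    {x | ∃ v ∈ Phi, ∃ w ∈ Phi, x = reflectIn v (reflectIn w muE6)}

/-! ### Rational (integer) models -/

abbrev Q6 : Type := Fin 6 → ℤ

def wB : Fin 6 → ℤ := fun i => if i = 0 then 1 else 3
def B (p q : Q6) : ℤ := ∑ i, wB i * p i * q i
def cE : Fin 6 → ℝ := fun i => if i = 0 then Real.sqrt 3 / 6 else 1/2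
def iQ (q : Q6) : E6V := toE (fun i => (q i : ℝ) * cE i)

def rPhiPlus : Finset Q6 := {![0,2,2,0,0,0], ![0,2,-2,0,0,0], ![0,2,0,2,0,0], ![0,2,0,-2,0,0], ![0,2,0,0,2,0], ![0,2,0,0,-2,0], ![0,2,0,0,0,2], ![0,2,0,0,0,-2], ![0,0,2,2,0,0], ![0,0,2,-2,0,0], ![0,0,2,0,2,0], ![0,0,2,0,-2,0], ![0,0,2,0,0,2], ![0,0,2,0,0,-2], ![0,0,0,2,2,0], ![0,0,0,2,-2,0], ![0,0,0,2,0,2], ![0,0,0,2,0,-2], ![0,0,0,0,2,2], ![0,0,0,0,2,-2], ![3,1,1,1,1,1], ![3,1,1,1,-1,-1], ![3,1,1,-1,1,-1], ![3,1,1,-1,-1,1], ![3,1,-1,1,1,-1], ![3,1,-1,1,-1,1], ![3,1,-1,-1,1,1], ![3,1,-1,-1,-1,-1], ![3,-1,1,1,1,-1], ![3,-1,1,1,-1,1], ![3,-1,1,-1,1,1], ![3,-1,1,-1,-1,-1], ![3,-1,-1,1,1,1], ![3,-1,-1,1,-1,-1], ![3,-1,-1,-1,1,-1], ![3,-1,-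1,-1,-1,1]}

def rSigma : Finset Q6 := {![-2,-2,0,0,0,0], ![-2,0,-2,0,0,0], ![-2,0,0,-2,0,0], ![-2,0,0,0,-2,0], ![-2,0,0,0,0,-2], ![-2,0,0,0,0,2], ![-2,0,0,0,2,0], ![-2,0,0,2,0,0], ![-2,0,2,0,0,0], ![-2,2,0,0,0,0], ![1,-1,-1,-1,-1,-1], ![1,-1,-1,-1,1,1], ![1,-1,-1,1,-1,1], ![1,-1,-1,1,1,-1], ![1,-1,1,-1,-1,1], ![1,-1,1,-1,1,-1], ![1,-1,1,1,-1,-1], ![1,-1,1,1,1,1], ![1,1,-1,-1,-1,1], ![1,1,-1,-1,1,-1], ![1,1,-1,1,-1,-1], ![1,1,-1,1,1,1], ![1,1,1,-1,-1,-1], ![1,1,1,-1,1,1], ![1,1,1,1,-1,1], ![1,1,1,1,1,-1], ![4,0,0,0,0,0]}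

def T45 : Finset (Finset Q6) := {{![-2,-2,0,0,0,0], ![-2,2,0,0,0,0], ![4,0,0,0,0,0]}, {![-2,-2,0,0,0,0], ![1,1,-1,-1,-1,1], ![1,1,1,1,1,-1]}, {![-2,-2,0,0,0,0], ![1,1,-1,-1,1,-1], ![1,1,1,1,-1,1]}, {![-2,-2,0,0,0,0], ![1,1,-1,1,-1,-1], ![1,1,1,-1,1,1]}, {![-2,-2,0,0,0,0], ![1,1,-1,1,1,1], ![1,1,1,-1,-1,-1]}, {![-2,0,-2,0,0,0], ![-2,0,2,0,0,0], ![4,0,0,0,0,0]}, {![-2,0,-2,0,0,0], ![1,-1,1,-1,-1,1], ![1,1,1,1,1,-1]}, {![-2,0,-2,0,0,0], ![1,-1,1,-1,1,-1], ![1,1,1,1,-1,1]}, {![-2,0,-2,0,0,0], ![1,-1,1,1,-1,-1], ![1,1,1,-1,1,1]}, {![-2,0,-2,0,0,0], ![1,-1,1,1,1,1], ![1,1,1,-1,-1,-1]}, {![-2,0,0,-2,0,0], ![-2,0,0,2,0,0], ![4,0,0,0,0,0]}, {![-2,0,0,-2,0,0], ![1,-1,-1,1,-1,1], ![1,1,1,1,1,-1]},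 {![-2,0,0,-2,0,0], ![1,-1,-1,1,1,-1], ![1,1,1,1,-1,1]}, {![-2,0,0,-2,0,0], ![1,-1,1,1,-1,-1], ![1,1,-1,1,1,1]}, {![-2,0,0,-2,0,0], ![1,-1,1,1,1,1], ![1,1,-1,1,-1,-1]}, {![-2,0,0,0,-2,0], ![-2,0,0,0,2,0], ![4,0,0,0,0,0]}, {![-2,0,0,0,-2,0], ![1,-1,-1,-1,1,1], ![1,1,1,1,1,-1]}, {![-2,0,0,0,-2,0], ![1,-1,-1,1,1,-1], ![1,1,1,-1,1,1]}, {![-2,0,0,0,-2,0], ![1,-1,1,-1,1,-1], ![1,1,-1,1,1,1]}, {![-2,0,0,0,-2,0], ![1,-1,1,1,1,1], ![1,1,-1,-1,1,-1]}, {![-2,0,0,0,0,-2], ![-2,0,0,0,0,2], ![4,0,0,0,0,0]}, {![-2,0,0,0,0,-2], ![1,-1,-1,-1,1,1], ![1,1,1,1,-1,1]}, {![-2,0,0,0,0,-2], ![1,-1,-1,1,-1,1], ![1,1,1,-1,1,1]}, {![-2,0,0,0,0,-2], ![1,-1,1,-1,-1,1], ![1,1,-1,1,1,1]}, {![-2,0,0,0,0,-2],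 ![1,-1,1,1,1,1], ![1,1,-1,-1,-1,1]}, {![-2,0,0,0,0,2], ![1,-1,-1,-1,-1,-1], ![1,1,1,1,1,-1]}, {![-2,0,0,0,0,2], ![1,-1,-1,1,1,-1], ![1,1,1,-1,-1,-1]}, {![-2,0,0,0,0,2], ![1,-1,1,-1,1,-1], ![1,1,-1,1,-1,-1]}, {![-2,0,0,0,0,2], ![1,-1,1,1,-1,-1], ![1,1,-1,-1,1,-1]}, {![-2,0,0,0,2,0], ![1,-1,-1,-1,-1,-1], ![1,1,1,1,-1,1]}, {![-2,0,0,0,2,0], ![1,-1,-1,1,-1,1], ![1,1,1,-1,-1,-1]}, {![-2,0,0,0,2,0], ![1,-1,1,-1,-1,1], ![1,1,-1,1,-1,-1]}, {![-2,0,0,0,2,0], ![1,-1,1,1,-1,-1], ![1,1,-1,-1,-1,1]}, {![-2,0,0,2,0,0], ![1,-1,-1,-1,-1,-1], ![1,1,1,-1,1,1]}, {![-2,0,0,2,0,0], ![1,-1,-1,-1,1,1], ![1,1,1,-1,-1,-1]}, {![-2,0,0,2,0,0], ![1,-1,1,-1,-1,1], ![1,1,-1,-1,1,-1]}, {![-2,0,0,2,0,0],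 ![1,-1,1,-1,1,-1], ![1,1,-1,-1,-1,1]}, {![-2,0,2,0,0,0], ![1,-1,-1,-1,-1,-1], ![1,1,-1,1,1,1]}, {![-2,0,2,0,0,0], ![1,-1,-1,-1,1,1], ![1,1,-1,1,-1,-1]}, {![-2,0,2,0,0,0], ![1,-1,-1,1,-1,1], ![1,1,-1,-1,1,-1]}, {![-2,0,2,0,0,0], ![1,-1,-1,1,1,-1], ![1,1,-1,-1,-1,1]}, {![-2,2,0,0,0,0], ![1,-1,-1,-1,-1,-1], ![1,-1,1,1,1,1]}, {![-2,2,0,0,0,0], ![1,-1,-1,-1,1,1], ![1,-1,1,1,-1,-1]}, {![-2,2,0,0,0,0], ![1,-1,-1,1,-1,1], ![1,-1,1,-1,1,-1]}, {![-2,2,0,0,0,0], ![1,-1,-1,1,1,-1], ![1,-1,1,-1,-1,1]}}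

def rPhi : Finset Q6 := rPhiPlus ∪ rPhiPlus.image (fun v => -v)
def rMu : Q6 := ![4,0,0,0,0,0]
def rRefl (v x : Q6) : Q6 := x - (2 * B x v / B v v) • v
def gdet (a b c : Q6) : ℤ :=
  B a a * (B b b * B c c - B b c * B c b) - B a b * (B b a * B c c - B b c * B c a)
    + B a c * (B b a * B c b - B b b * B c a)
lemma iQ_apply (q : Q6) (i : Fin 6) : iQ q i = (q i : ℝ) * cE i := rfl

lemma inner_iQ (p q : Q6) : (inner ℝ (iQ p) (iQ q) : ℝ) = (B p q : ℝ) / 12 := by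
  rw [PiLp.inner_apply]
  simp only [iQ_apply, RCLike.inner_apply, conj_trivial, B]
  push_cast
  rw [Finset.sum_div]
  apply Finset.sum_congr rfl
  intro i _
  rcases eq_or_ne i 0 with h | h <;>
    simp only [cE, wB, h, if_pos, if_neg, ite_true, ite_false] <;> ring_nf
  · rw [Real.sq_sqrt (by norm_num)]
    ring

lemma iQ_add (p q : Q6) : iQ (p + q) = iQ p + iQ q := by
  ext i; simp [iQ_apply, Pi.add_apply]; ring

lemma iQ_sub (p q : Q6) : iQ (p - q) = iQ p - iQ q := by
  ext i; simp [iQ_apply, Pi.sub_apply]; ring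

lemma iQ_neg (p : Q6) : iQ (-p) = -iQ p := by
  ext i; simp [iQ_apply]

lemma iQ_smul (c : ℤ) (p : Q6) : iQ (c • p) = (c : ℝ) • iQ p := by
  ext i; simp [iQ_apply]; ring

lemma iQ_zero : iQ 0 = 0 := by
  ext i; simp [iQ_apply]

lemma cE_ne (i : Fin 6) : cE i ≠ 0 := by
  rcases eq_or_ne i 0 with h|h <;> simp [cE, h]

lemma iQ_inj : Function.Injective iQ := by
  intro p q h
  funext i
  have := congrFun (congrArg (WithLp.equiv 2 (Fin 6 → ℝ)) h) i
  simp only [iQ, toE, Equiv.apply_symm_apply] at this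
  have := mul_right_cancel₀ (cE_ne i) this
  exact_mod_cast this
lemma reflect_bridge (v x : Q6) (hv : B v v = 24) (hdvd : (12:ℤ) ∣ B x v) :
    reflectIn (iQ v) (iQ x) = iQ (rRefl v x) := by
  obtain ⟨c, hc⟩ := hdvd
  have h1 : 2 * B x v / B v v = c := by rw [hv, hc]; omega
  have h2 : (2 * (inner ℝ (iQ x) (iQ v) : ℝ) / (inner ℝ (iQ v) (iQ v) : ℝ)) = (c : ℝ) := by
    rw [inner_iQ, inner_iQ, hv, hc]
    push_cast
    field_simp
    ring
  rw [reflectIn, rRefl, h1, iQ_sub, iQ_smul, h2]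

/-- parity of the number of `-1`s among a `±1`-vector, via the product. -/
lemma parity_iff {R : Type*} [CommRing R] [DecidableEq R] (hne : (-1:R) ≠ 1)
    (s : Fin 5 → R) (h : ∀ k, s k = 1 ∨ s k = -1) :
    Even (Finset.univ.filter (fun k => s k = -1)).card ↔ (∏ k, s k) = 1 := by
  have h2 : ∏ x ∈ Finset.univ.filter (fun k => s k = -1), s x
      = (-1:R) ^ (Finset.univ.filter (fun k => s k = -1)).card := by
    rw [Finset.prod_congr rfl (fun k hk => (Finset.mem_filter.1 hk).2)]
    exact Finset.prod_const _
  have h3 : ∏ x ∈ Finset.univ.filter (fun k => ¬ s k = -1), s x = 1 :=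
    Finset.prod_eq_one (fun k hk => (h k).resolve_right (Finset.mem_filter.1 hk).2)
  rw [← Finset.prod_filter_mul_prod_filter_not Finset.univ (fun k => s k = -1), h2, h3, mul_one,
    neg_one_pow_eq_one_iff_even hne]
def pfQ (i j : Fin 6) (c : ℤ) : Q6 := fun k => if k = i then 2 else if k = j then c else 0

section Facts
lemma fact_card : rSigma.card = 27 := by decide +kernel
lemma fact_Bvv : ∀ v ∈ rPhi, B v v = 24 := by decide +kernel
lemma fact_div : ∀ v ∈ rPhi, ∀ x ∈ rSigma, (12:ℤ) ∣ B x v := by decide +kernel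
lemma fact_div1 : ∀ v ∈ rPhi, (12:ℤ) ∣ B rMu v := by decide +kernel
lemma fact_mem1 : ∀ v ∈ rPhi, rRefl v rMu ∈ rSigma := by decide +kernel
lemma fact_mem2 : ∀ v ∈ rPhi, ∀ x ∈ rSigma, rRefl v x ∈ rSigma := by decide +kernel
lemma fact_onto : ∀ x ∈ rSigma, ∃ v ∈ rPhi, ∃ w ∈ rPhi, rRefl v (rRefl w rMu) = x := by decide +kernel
lemma fact_mu_mem : rMu ∈ rSigma := by decide +kernel
lemma fact_gram : ∀ a ∈ rSigma, ∀ b ∈ rSigma, ∀ c ∈ rSigma,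
    a + b + c = 0 ∨ gdet a b c ≠ 0 ∨ a = b ∨ a = c ∨ b = c := by decide +kernel
lemma fact_pairmem : ∀ i j : Fin 6, 0 < (i:ℕ) → i < j →
    pfQ i j 2 ∈ rPhiPlus ∧ pfQ i j (-2) ∈ rPhiPlus := by decide +kernel
lemma fact_spinmem : ∀ σ ∈ Fintype.piFinset (fun _ : Fin 5 => ({1,-1} : Finset ℤ)),
    (∏ k, σ k) = 1 → Fin.cons (3:ℤ) σ ∈ rPhiPlus := by decide +kernel
lemma fact_classify : ∀ r ∈ rPhiPlus,
    (∃ i j : Fin 6, 0 < (i:ℕ) ∧ i < j ∧ (r = pfQ i j 2 ∨ r = pfQ i j (-2))) ∨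
    (r = Fin.cons 3 (Fin.tail r) ∧ (∀ k : Fin 5, Fin.tail r k = 1 ∨ Fin.tail r k = -1) ∧
      (∏ k : Fin 5, Fin.tail r k) = 1) := by decide +kernel
lemma fact_T45_card : T45.card = 45 := by decide +kernel
lemma fact_T45_mem : ∀ t ∈ T45, t ⊆ rSigma ∧ t.card = 3 ∧ t.sum id = 0 := by decide +kernel
lemma fact_T45_complete : ∀ a ∈ rSigma, ∀ b ∈ rSigma, ∀ c ∈ rSigma,
    a + b + c = 0 → ({a, b, c} : Finset Q6) ∈ T45 ∨ a = b ∨ a = c ∨ b = c := by decide +kernel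
end Facts
lemma toE_apply (f : Fin 6 → ℝ) (k : Fin 6) : toE f k = f k := rfl

lemma stdE_apply (i k : Fin 6) : stdE i k = if k = i then 1 else 0 := by
  simp [stdE, EuclideanSpace.single_apply]

lemma fin6_ne_zero_of_pos {i : Fin 6} (hi : 0 < (i:ℕ)) : i ≠ 0 := by
  intro h; subst h; simp at hi

lemma cE_of_ne {i : Fin 6} (h : i ≠ 0) : cE i = 1/2 := by simp [cE, h]

lemma iQ_pf_add (i j : Fin 6) (hi : 0 < (i:ℕ)) (hij : i < j) :
    iQ (pfQ i j 2) = stdE i + stdE j := by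
  have hj : 0 < (j:ℕ) := lt_trans hi hij
  have hne : i ≠ j := ne_of_lt hij
  ext k
  rw [PiLp.add_apply, iQ_apply, stdE_apply, stdE_apply, pfQ]
  by_cases hk : k = i
  · subst hk
    rw [if_pos rfl, if_pos rfl, if_neg hne, cE_of_ne (fin6_ne_zero_of_pos hi)]
    norm_num
  · rw [if_neg hk]
    by_cases hk2 : k = j
    · subst hk2
      rw [if_pos rfl, if_pos rfl, if_neg hk, cE_of_ne (fin6_ne_zero_of_pos hj)]
      norm_num
    · rw [if_neg hk2, if_neg hk, if_neg hk2]
      norm_num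

lemma iQ_pf_sub (i j : Fin 6) (hi : 0 < (i:ℕ)) (hij : i < j) :
    iQ (pfQ i j (-2)) = stdE i - stdE j := by
  have hj : 0 < (j:ℕ) := lt_trans hi hij
  have hne : i ≠ j := ne_of_lt hij
  ext k
  rw [PiLp.sub_apply, iQ_apply, stdE_apply, stdE_apply, pfQ]
  by_cases hk : k = i
  · subst hk
    rw [if_pos rfl, if_pos rfl, if_neg hne, cE_of_ne (fin6_ne_zero_of_pos hi)]
    norm_num
  · rw [if_neg hk]
    by_cases hk2 : k = j
    · subst hk2
      rw [if_pos rfl, if_pos rfl, if_neg hk, cE_of_ne (fin6_ne_zero_of_pos hj)]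
      norm_num
    · rw [if_neg hk2, if_neg hk, if_neg hk2]
      norm_num

lemma spin_iQ (σ : Fin 5 → ℤ) :
    iQ (Fin.cons 3 σ) = toE (Fin.cons (Real.sqrt 3 / 2) (fun k => ((σ k : ℝ))/2)) := by
  ext k
  rw [iQ_apply, toE_apply]
  refine Fin.cases ?_ (fun k' => ?_) k
  · simp only [Fin.cons_zero]
    simp [cE]
    ring
  · simp only [Fin.cons_succ]
    rw [cE_of_ne (Fin.succ_ne_zero k')]
    ring
lemma spin_mem_PhiPlus (σ : Fin 5 → ℤ) (hσ : ∀ k, σ k = 1 ∨ σ k = -1)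
    (hp : (∏ k, σ k) = 1) : iQ (Fin.cons 3 σ) ∈ PhiPlus := by
  right
  refine ⟨fun k => (σ k : ℝ), ?_, ?_, ?_⟩
  · intro k
    rcases hσ k with h | h <;> simp [h]
  · have h1 : ∀ k, ((σ k : ℝ) = -1) ↔ (σ k = -1) := by
      intro k; constructor
      · intro h; exact_mod_cast h
      · intro h; rw [h]; norm_num
    have h2 : (Finset.univ.filter (fun k => (σ k : ℝ) = -1)).card
        = (Finset.univ.filter (fun k => σ k = -1)).card := by
      congr 1
      apply Finset.filter_congr
      intro k _
      simp [h1 k]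
    rw [h2]
    rw [parity_iff (by norm_num) (fun k => (σ k : ℤ)) hσ]
    exact hp
  · rw [← spin_iQ σ]

lemma pair_mem_PhiPlus (i j : Fin 6) (hi : 0 < (i:ℕ)) (hij : i < j) (c : ℤ)
    (hc : c = 2 ∨ c = -2) : iQ (pfQ i j c) ∈ PhiPlus := by
  left
  rcases hc with rfl | rfl
  · exact ⟨i, j, hi, hij, Or.inl (iQ_pf_add i j hi hij)⟩
  · exact ⟨i, j, hi, hij, Or.inr (iQ_pf_sub i j hi hij)⟩

lemma sub_PhiPlus : iQ '' ↑rPhiPlus ⊆ PhiPlus := by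
  rintro _ ⟨r, hr, rfl⟩
  rcases fact_classify r hr with ⟨i, j, hi, hij, hc | hc⟩ | ⟨hr0, hσ, hp⟩
  · rw [hc]; exact pair_mem_PhiPlus i j hi hij 2 (Or.inl rfl)
  · rw [hc]; exact pair_mem_PhiPlus i j hi hij (-2) (Or.inr rfl)
  · rw [hr0]; exact spin_mem_PhiPlus _ hσ hp

lemma PhiPlus_sub : PhiPlus ⊆ iQ '' ↑rPhiPlus := by
  rintro v (⟨i, j, hi, hij, hv | hv⟩ | ⟨s, hs, hpar, hv⟩)
  · exact ⟨pfQ i j 2, (fact_pairmem i j hi hij).1, by rw [iQ_pf_add i j hi hij, hv]⟩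
  · exact ⟨pfQ i j (-2), (fact_pairmem i j hi hij).2, by rw [iQ_pf_sub i j hi hij, hv]⟩
  · classical
    set σ : Fin 5 → ℤ := fun k => if s k = 1 then 1 else -1 with hσdef
    have hσs : ∀ k, (σ k : ℝ) = s k := by
      intro k
      rcases hs k with h | h
      · simp [hσdef, h]
      · have h1 : s k ≠ 1 := by rw [h]; norm_num
        rw [hσdef]
        simp only [h1, if_false]
        rw [h]
        norm_num
    have hσpm : ∀ k, σ k = 1 ∨ σ k = -1 := by
      intro k
      by_cases h : s k = 1
      · left; simp [hσdef, h]
      · right; simp [hσdef, h]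
    have hmem : σ ∈ Fintype.piFinset (fun _ : Fin 5 => ({1,-1} : Finset ℤ)) := by
      rw [Fintype.mem_piFinset]
      intro k
      rcases hσpm k with h | h <;> simp [h]
    have hprod : (∏ k, σ k) = 1 := by
      have hr : ((∏ k, σ k : ℤ) : ℝ) = ∏ k, s k := by
        push_cast
        exact Finset.prod_congr rfl (fun k _ => hσs k)
      have hfilt : (Finset.univ.filter (fun k => s k = -1)).card
          = (Finset.univ.filter (fun k => (σ k : ℝ) = -1)).card := by
        congr 1
        apply Finset.filter_congr
        intro k _
        simp [hσs k]
      have : (∏ k, s k) = 1 := by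
        rw [← parity_iff (R := ℝ) (by norm_num) s hs]
        exact hpar
      have : ((∏ k, σ k : ℤ) : ℝ) = 1 := by rw [hr, this]
      exact_mod_cast this
    refine ⟨Fin.cons 3 σ, fact_spinmem σ hmem hprod, ?_⟩
    have hfun : (fun k : Fin 5 => ((σ k : ℝ))/2) = fun k => s k / 2 := by
      funext k; rw [hσs k]
    rw [spin_iQ σ, hfun, hv]

lemma Phi_eq : Phi = iQ '' ↑rPhi := by
  have hcoe : (↑rPhi : Set Q6) = ↑rPhiPlus ∪ (fun v => -v) '' ↑rPhiPlus := by
    rw [rPhi]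
    push_cast
    rfl
  ext v
  constructor
  · rintro (hv | hv)
    · obtain ⟨r, hr, rfl⟩ := PhiPlus_sub hv
      exact ⟨r, by rw [hcoe]; exact Or.inl hr, rfl⟩
    · have h2 : -v ∈ PhiPlus := by rwa [Set.mem_neg] at hv
      obtain ⟨r, hr, hr2⟩ := PhiPlus_sub h2
      refine ⟨-r, by rw [hcoe]; exact Or.inr ⟨r, hr, rfl⟩, ?_⟩
      rw [iQ_neg, hr2, neg_neg]
  · rintro ⟨r, hr, rfl⟩
    rw [hcoe] at hr
    rcases hr with hr | ⟨p, hp, rfl⟩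
    · exact Or.inl (sub_PhiPlus ⟨r, hr, rfl⟩)
    · right
      rw [Set.mem_neg, iQ_neg, neg_neg]
      exact sub_PhiPlus ⟨p, hp, rfl⟩
lemma mu_eq : muE6 = iQ rMu := by
  ext k
  rw [muE6, toE_apply, iQ_apply]
  fin_cases k
  · show 2 * Real.sqrt 3 / 3 = ((4:ℤ):ℝ) * (Real.sqrt 3 / 6)
    push_cast; ring
  · show (0:ℝ) = ((0:ℤ):ℝ) * (1/2)
    norm_num
  · show (0:ℝ) = ((0:ℤ):ℝ) * (1/2)
    norm_num
  · show (0:ℝ) = ((0:ℤ):ℝ) * (1/2)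
    norm_num
  · show (0:ℝ) = ((0:ℤ):ℝ) * (1/2)
    norm_num
  · show (0:ℝ) = ((0:ℤ):ℝ) * (1/2)
    norm_num

lemma Sigma_eq : SigmaE6 = iQ '' ↑rSigma := by
  ext x
  constructor
  · rintro ((hx | ⟨v, hv, rfl⟩) | ⟨v, hv, w, hw, rfl⟩)
    · rw [Set.mem_singleton_iff] at hx
      exact ⟨rMu, fact_mu_mem, by rw [hx, mu_eq]⟩
    · rw [Phi_eq] at hv
      obtain ⟨rv, hrv, rfl⟩ := hv
      rw [Finset.mem_coe] at hrv
      refine ⟨rRefl rv rMu, fact_mem1 rv hrv, ?_⟩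
      rw [mu_eq, reflect_bridge rv rMu (fact_Bvv rv hrv) (fact_div1 rv hrv)]
    · rw [Phi_eq] at hv hw
      obtain ⟨rv, hrv, rfl⟩ := hv
      obtain ⟨rw', hrw, rfl⟩ := hw
      rw [Finset.mem_coe] at hrv hrw
      have h1 : rRefl rw' rMu ∈ rSigma := fact_mem1 rw' hrw
      refine ⟨rRefl rv (rRefl rw' rMu), fact_mem2 rv hrv _ h1, ?_⟩
      rw [mu_eq, reflect_bridge rw' rMu (fact_Bvv rw' hrw) (fact_div1 rw' hrw),
        reflect_bridge rv _ (fact_Bvv rv hrv) (fact_div rv hrv _ h1)]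
  · rintro ⟨r, hr, rfl⟩
    rw [Finset.mem_coe] at hr
    obtain ⟨v, hv, w, hw, heq⟩ := fact_onto r hr
    right
    refine ⟨iQ v, by rw [Phi_eq]; exact ⟨v, hv, rfl⟩, iQ w, by rw [Phi_eq]; exact ⟨w, hw, rfl⟩, ?_⟩
    rw [mu_eq, reflect_bridge w rMu (fact_Bvv w hw) (fact_div1 w hw),
      reflect_bridge v _ (fact_Bvv v hv) (fact_div v hv _ (fact_mem1 w hw)), heq]

lemma gram_indep (a b c : Q6) (hd : gdet a b c ≠ 0) :
    LinearIndependent ℝ ![iQ a, iQ b, iQ c] := by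
  rw [Fintype.linearIndependent_iff]
  intro g hg
  have hsum : g 0 • iQ a + g 1 • iQ b + g 2 • iQ c = 0 := by
    have := hg
    rwa [Fin.sum_univ_three] at this
  have key : ∀ p : Q6, (B p a : ℝ) * g 0 + (B p b : ℝ) * g 1 + (B p c : ℝ) * g 2 = 0 := by
    intro p
    have h0 := congrArg (fun y => (inner ℝ (iQ p) y : ℝ)) hsum
    simp only [inner_add_right, inner_smul_right, inner_zero_right, inner_iQ] at h0
    have h12 : (12:ℝ) ≠ 0 := by norm_num
    field_simp at h0
    linarith [h0]
  have f1 := key a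
  have f2 := key b
  have f3 := key c
  set x := g 0
  set y := g 1
  set z := g 2
  have hD : ((gdet a b c : ℤ) : ℝ) ≠ 0 := Int.cast_ne_zero.mpr hd
  have hDval : ((gdet a b c : ℤ) : ℝ) =
      (B a a : ℝ) * ((B b b : ℝ) * (B c c : ℝ) - (B b c : ℝ) * (B c b : ℝ))
      - (B a b : ℝ) * ((B b a : ℝ) * (B c c : ℝ) - (B b c : ℝ) * (B c a : ℝ))
      + (B a c : ℝ) * ((B b a : ℝ) * (B c b : ℝ) - (B b b : ℝ) * (B c a : ℝ)) := by
    rw [gdet]; push_cast; ring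
  have hx : x * ((gdet a b c : ℤ) : ℝ) = 0 := by
    rw [hDval]
    linear_combination ((B b b : ℝ) * (B c c:ℝ) - (B b c:ℝ) * (B c b:ℝ)) * f1
      - ((B a b:ℝ) * (B c c:ℝ) - (B a c:ℝ) * (B c b:ℝ)) * f2
      + ((B a b:ℝ) * (B b c:ℝ) - (B a c:ℝ) * (B b b:ℝ)) * f3
  have hy : y * ((gdet a b c : ℤ) : ℝ) = 0 := by
    rw [hDval]
    linear_combination (-((B b a : ℝ) * (B c c:ℝ) - (B b c:ℝ) * (B c a:ℝ))) * f1
      + ((B a a:ℝ) * (B c c:ℝ) - (B a c:ℝ) * (B c a:ℝ)) * f2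
      - ((B a a:ℝ) * (B b c:ℝ) - (B a c:ℝ) * (B b a:ℝ)) * f3
  have hz : z * ((gdet a b c : ℤ) : ℝ) = 0 := by
    rw [hDval]
    linear_combination ((B b a : ℝ) * (B c b:ℝ) - (B b b:ℝ) * (B c a:ℝ)) * f1
      - ((B a a:ℝ) * (B c b:ℝ) - (B a b:ℝ) * (B c a:ℝ)) * f2
      + ((B a a:ℝ) * (B b b:ℝ) - (B a b:ℝ) * (B b a:ℝ)) * f3
  have hx0 : x = 0 := by
    rcases mul_eq_zero.1 hx with h | h
    · exact h
    · exact absurd h hD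
  have hy0 : y = 0 := by
    rcases mul_eq_zero.1 hy with h | h
    · exact h
    · exact absurd h hD
  have hz0 : z = 0 := by
    rcases mul_eq_zero.1 hz with h | h
    · exact h
    · exact absurd h hD
  intro i
  fin_cases i
  · exact hx0
  · exact hy0
  · exact hz0

lemma range_three (va vb vc : E6V) : Set.range ![va, vb, vc] = {va, vb, vc} := by
  ext u
  simp [Matrix.range_cons, Matrix.range_empty, Set.singleton_union]
  tauto

lemma indep_rank {va vb vc : E6V} (h : LinearIndependent ℝ ![va, vb, vc]) :
    Module.finrank ℝ (Submodule.span ℝ ({va, vb, vc} : Set E6V)) = 3 := by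
  have := finrank_span_eq_card h
  rwa [range_three, Fintype.card_fin] at this

lemma rank_le_two_of_sum {va vb vc : E6V} (h : va + vb + vc = 0) :
    Module.finrank ℝ (Submodule.span ℝ ({va, vb, vc} : Set E6V)) ≤ 2 := by
  have hle : Submodule.span ℝ ({va, vb, vc} : Set E6V) ≤
      Submodule.span ℝ ({va, vb} : Set E6V) := by
    rw [Submodule.span_le]
    rintro u (h1 | h1 | h1) <;> rw [h1]
    · exact Submodule.subset_span (by simp)
    · exact Submodule.subset_span (by simp)
    · have hvc : vc = -(va + vb) := eq_neg_of_add_eq_zero_right h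
      rw [hvc]
      exact Submodule.neg_mem _ (Submodule.add_mem _
        (Submodule.subset_span (by simp)) (Submodule.subset_span (by simp)))
  refine le_trans (Submodule.finrank_mono hle) ?_
  have h2 : ({va, vb} : Set E6V) = Set.range ![va, vb] := by
    ext u
    simp [Matrix.range_cons, Matrix.range_empty, Set.singleton_union]
    tauto
  rw [h2]
  simpa [Set.finrank] using finrank_range_le_card (R := ℝ) ![va, vb]
lemma iQ_sum3 (x y z : Q6) : iQ x + iQ y + iQ z = iQ (x + y + z) := by
  rw [iQ_add, iQ_add]

lemma image_insert3 (a b c : Q6) :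
    iQ '' ↑({a, b, c} : Finset Q6) = {iQ a, iQ b, iQ c} := by
  rw [Finset.coe_insert, Finset.coe_insert, Finset.coe_singleton,
    Set.image_insert_eq, Set.image_insert_eq, Set.image_singleton]

lemma injmap : Function.Injective (fun t : Finset Q6 => iQ '' ↑t) := by
  intro t1 t2 h
  apply Finset.coe_injective
  exact Set.image_injective.mpr iQ_inj h

lemma sum3_of_finset {a b c : Q6} (hab : a ≠ b) (hac : a ≠ c) (hbc : b ≠ c) :
    ({a, b, c} : Finset Q6).sum id = a + b + c := by
  rw [Finset.sum_insert (by simp [hab, hac]), Finset.sum_insert (by simp [hbc]),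
    Finset.sum_singleton, id, id, id, ← add_assoc]

/-- if `t ⊆ rSigma` has three elements and its vectors are not coplanar-with-0,
the corresponding real span has rank 3. -/
lemma rank_dichotomy {a b c : Q6} (ha : a ∈ rSigma) (hb : b ∈ rSigma) (hc : c ∈ rSigma)
    (hab : a ≠ b) (hac : a ≠ c) (hbc : b ≠ c)
    (hrk : Module.finrank ℝ (Submodule.span ℝ ({iQ a, iQ b, iQ c} : Set E6V)) ≤ 2) :
    a + b + c = 0 := by
  rcases fact_gram a ha b hb c hc with h | h | h | h | h
  · exact h
  · exfalso
    have h3 := indep_rank (gram_indep a b c h)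
    omega
  · exact absurd h hab
  · exact absurd h hac
  · exact absurd h hbc

lemma first_count :
    {s : Set E6V | s ⊆ SigmaE6 ∧ s.ncard = 3} =
      (fun t : Finset Q6 => iQ '' ↑t) '' ↑(rSigma.powersetCard 3) := by
  classical
  ext s
  simp only [Set.mem_setOf_eq, Set.mem_image, Finset.mem_coe, Finset.mem_powersetCard]
  constructor
  · rintro ⟨hsub, hcard⟩
    have hsub' : s ⊆ iQ '' ↑rSigma := by rwa [← Sigma_eq]
    set u : Finset Q6 := rSigma.filter (fun q => iQ q ∈ s) with hu
    have hs_eq : s = iQ '' ↑u := by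
      ext x
      constructor
      · intro hx
        obtain ⟨q, hq, rfl⟩ := hsub' hx
        exact ⟨q, by simp [hu, Finset.mem_filter, Finset.mem_coe.1 hq, hx], rfl⟩
      · rintro ⟨q, hq, rfl⟩
        simp only [hu, Finset.coe_filter, Set.mem_setOf_eq] at hq
        exact hq.2
    refine ⟨u, ⟨Finset.filter_subset _ _, ?_⟩, hs_eq.symm⟩
    rw [hs_eq] at hcard
    rwa [Set.ncard_image_of_injective _ iQ_inj, Set.ncard_coe_finset] at hcard
  · rintro ⟨t, ⟨hsub, hcard⟩, rfl⟩
    constructor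
    · rw [Sigma_eq]
      exact Set.image_mono (Finset.coe_subset.mpr hsub)
    · rw [Set.ncard_image_of_injective _ iQ_inj, Set.ncard_coe_finset]
      exact hcard

lemma second_count :
    {s : Set E6V | s ⊆ SigmaE6 ∧ s.ncard = 3 ∧
        Module.finrank ℝ (Submodule.span ℝ s) ≤ 2} =
      (fun t : Finset Q6 => iQ '' ↑t) '' ↑T45 := by
  classical
  ext s
  simp only [Set.mem_setOf_eq, Set.mem_image, Finset.mem_coe]
  constructor
  · rintro ⟨hsub, hcard, hrk⟩
    have h1 : s ∈ {s : Set E6V | s ⊆ SigmaE6 ∧ s.ncard = 3} := ⟨hsub, hcard⟩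
    rw [first_count] at h1
    obtain ⟨t, ht, rfl⟩ := h1
    rw [Finset.mem_coe, Finset.mem_powersetCard] at ht
    obtain ⟨htsub, htcard⟩ := ht
    obtain ⟨a, b, c, hab, hac, hbc, rfl⟩ := Finset.card_eq_three.mp htcard
    have ha : a ∈ rSigma := htsub (by simp)
    have hb : b ∈ rSigma := htsub (by simp)
    have hc : c ∈ rSigma := htsub (by simp)
    have hrk' : Module.finrank ℝ (Submodule.span ℝ ({iQ a, iQ b, iQ c} : Set E6V)) ≤ 2 := by
      rw [← image_insert3 a b c]
      exact hrk
    have hsum : a + b + c = 0 := rank_dichotomy ha hb hc hab hac hbc hrk'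
    rcases fact_T45_complete a ha b hb c hc hsum with h | h | h | h
    · exact ⟨_, h, rfl⟩
    · exact absurd h hab
    · exact absurd h hac
    · exact absurd h hbc
  · rintro ⟨t, ht, rfl⟩
    obtain ⟨htsub, htcard, htsum⟩ := fact_T45_mem t ht
    obtain ⟨a, b, c, hab, hac, hbc, rfl⟩ := Finset.card_eq_three.mp htcard
    refine ⟨?_, ?_, ?_⟩
    · rw [Sigma_eq]
      exact Set.image_mono (Finset.coe_subset.mpr htsub)
    · rw [Set.ncard_image_of_injective _ iQ_inj, Set.ncard_coe_finset]
      exact htcard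
    · rw [image_insert3]
      apply rank_le_two_of_sum
      rw [iQ_sum3]
      rw [sum3_of_finset hab hac hbc] at htsum
      rw [htsum, iQ_zero]

/-- Among the 2925 three-element subsets of `Σ`, exactly 45 span a subspace of
dimension at most 2, and every such triple `{a, b, c}` satisfies `a + b + c = 0`. -/
theorem e6_sigma_triples :
    {s : Set E6V | s ⊆ SigmaE6 ∧ s.ncard = 3}.ncard = 2925 ∧
    {s : Set E6V | s ⊆ SigmaE6 ∧ s.ncard = 3 ∧
        Module.finrank ℝ (Submodule.span ℝ s) ≤ 2}.ncard = 45 ∧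
    ∀ a b c : E6V, a ∈ SigmaE6 → b ∈ SigmaE6 → c ∈ SigmaE6 →
      a ≠ b → a ≠ c → b ≠ c →
      Module.finrank ℝ (Submodule.span ℝ ({a, b, c} : Set E6V)) ≤ 2 →
      a + b + c = 0 := by
  refine ⟨?_, ?_, ?_⟩
  · rw [first_count, Set.ncard_image_of_injective _ injmap, Set.ncard_coe_finset,
      Finset.card_powersetCard, fact_card]
    norm_num [Nat.choose]
  · rw [second_count, Set.ncard_image_of_injective _ injmap, Set.ncard_coe_finset,
      fact_T45_card]
  · intro a b c ha hb hc hab hac hbc hrk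
    rw [Sigma_eq] at ha hb hc
    obtain ⟨a', ha', rfl⟩ := ha
    obtain ⟨b', hb', rfl⟩ := hb
    obtain ⟨c', hc', rfl⟩ := hc
    rw [Finset.mem_coe] at ha' hb' hc'
    have hsum : a' + b' + c' = 0 :=
      rank_dichotomy ha' hb' hc' (fun h => hab (by rw [h])) (fun h => hac (by rw [h]))
        (fun h => hbc (by rw [h])) hrk
    rw [iQ_sum3, hsum, iQ_zero]

end
end

section
/- Any subset of Σ containing at least 4 distinct elements spans a linear subspace of ℝ^6 of dimension at least 3. -/
noncomputable section

/-! ### Auxiliary rational/integer model -/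

abbrev Z6 : Type := ℤ × ℤ × ℤ × ℤ × ℤ × ℤ

def emb (z : Z6) : E6V :=
  toE ![(z.1 : ℝ) * Real.sqrt 3 / 6, (z.2.1 : ℝ)/6, (z.2.2.1 : ℝ)/6,
        (z.2.2.2.1 : ℝ)/6, (z.2.2.2.2.1 : ℝ)/6, (z.2.2.2.2.2 : ℝ)/6]

def zdot (x y : Z6) : ℤ :=
  3 * x.1 * y.1 + x.2.1 * y.2.1 + x.2.2.1 * y.2.2.1 + x.2.2.2.1 * y.2.2.2.1
    + x.2.2.2.2.1 * y.2.2.2.2.1 + x.2.2.2.2.2 * y.2.2.2.2.2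

def zsm (k : ℤ) (x : Z6) : Z6 :=
  (k*x.1, k*x.2.1, k*x.2.2.1, k*x.2.2.2.1, k*x.2.2.2.2.1, k*x.2.2.2.2.2)

def zsub (x y : Z6) : Z6 :=
  (x.1-y.1, x.2.1-y.2.1, x.2.2.1-y.2.2.1, x.2.2.2.1-y.2.2.2.1,
   x.2.2.2.2.1-y.2.2.2.2.1, x.2.2.2.2.2-y.2.2.2.2.2)

def zadd (x y : Z6) : Z6 :=
  (x.1+y.1, x.2.1+y.2.1, x.2.2.1+y.2.2.1, x.2.2.2.1+y.2.2.2.1,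
   x.2.2.2.2.1+y.2.2.2.2.1, x.2.2.2.2.2+y.2.2.2.2.2)

def zrefl (r x : Z6) : Z6 := zsub x (zsm (zdot x r / 36) r)

@[simp] lemma cons_val_five' {α : Type*} (a₀ a₁ a₂ a₃ a₄ a₅ : α) :
    ![a₀,a₁,a₂,a₃,a₄,a₅] 5 = a₅ := rfl

lemma inner_emb (x y : Z6) : (inner ℝ (emb x) (emb y) : ℝ) = (zdot x y : ℝ) / 36 := by
  obtain ⟨a,b,c,d,e,f⟩ := x
  obtain ⟨a',b',c',d',e',f'⟩ := y
  have h3 : Real.sqrt 3 * Real.sqrt 3 = 3 := Real.mul_self_sqrt (by norm_num)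
  simp only [emb, toE, zdot, PiLp.inner_apply, RCLike.inner_apply, conj_trivial,
    WithLp.equiv_symm_apply, PiLp.toLp_apply, Fin.sum_univ_succ, Finset.univ_eq_empty,
    Finset.sum_empty, Matrix.cons_val_zero, Matrix.cons_val_succ, add_zero]
  push_cast
  linear_combination ((a:ℝ) * a' / 36) * h3

lemma emb_sub_smul (k : ℤ) (x r : Z6) : emb (zsub x (zsm k r)) = emb x - (k : ℝ) • emb r := by
  obtain ⟨a,b,c,d,e,f⟩ := x
  obtain ⟨a',b',c',d',e',f'⟩ := r
  simp only [emb, zsub, zsm, toE, WithLp.equiv_symm_apply, ← WithLp.toLp_sub, ← WithLp.toLp_smul]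
  congr 1
  funext i
  simp only [Pi.sub_apply, Pi.smul_apply, smul_eq_mul]
  fin_cases i <;> (simp; push_cast; ring)

lemma emb_add (x y : Z6) : emb (zadd x y) = emb x + emb y := by
  obtain ⟨a,b,c,d,e,f⟩ := x
  obtain ⟨a',b',c',d',e',f'⟩ := y
  simp only [emb, zadd, toE, WithLp.equiv_symm_apply, ← WithLp.toLp_add]
  congr 1
  funext i
  simp only [Pi.add_apply]
  fin_cases i <;> (simp; push_cast; ring)

lemma emb_sub (x y : Z6) : emb (zsub x y) = emb x - emb y := by
  obtain ⟨a,b,c,d,e,f⟩ := x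
  obtain ⟨a',b',c',d',e',f'⟩ := y
  simp only [emb, zsub, toE, WithLp.equiv_symm_apply, ← WithLp.toLp_sub]
  congr 1
  funext i
  simp only [Pi.sub_apply]
  fin_cases i <;> (simp; push_cast; ring)

lemma reflect_emb (r x : Z6) (h72 : zdot r r = 72) (hdvd : (36:ℤ) ∣ zdot x r) :
    reflectIn (emb r) (emb x) = emb (zrefl r x) := by
  obtain ⟨k, hk⟩ := hdvd
  have hc : zdot x r / 36 = k := by omega
  rw [reflectIn, zrefl, hc, emb_sub_smul, inner_emb, inner_emb, h72, hk]
  push_cast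
  norm_num

lemma reflectIn_neg (v x : E6V) : reflectIn (-v) x = reflectIn v x := by
  rw [reflectIn, reflectIn, inner_neg_neg, inner_neg_right]
  congr 1
  rw [smul_neg, ← neg_smul]
  congr 1
  ring

lemma mu_emb : muE6 = emb (4,0,0,0,0,0) := by
  simp only [muE6, emb, toE]
  congr 1
  funext i
  fin_cases i <;> (simp; try ring)

def qe (i : Fin 6) : Z6 :=
  if i = 1 then (0,6,0,0,0,0) else if i = 2 then (0,0,6,0,0,0)
    else if i = 3 then (0,0,0,6,0,0) else if i = 4 then (0,0,0,0,6,0) else (0,0,0,0,0,6)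

lemma stdE_emb (i : Fin 6) (hi : 0 < (i:ℕ)) : stdE i = emb (qe i) := by
  have h : ∀ j : Fin 6, stdE j = toE (fun k => if k = j then 1 else 0) := by
    intro j
    simp only [stdE, toE]
    ext k
    simp [EuclideanSpace.single_apply, Pi.single_apply]
  fin_cases i
  · simp at hi
  all_goals
    rw [h, qe]
    simp only [emb, toE]
    congr 1
    funext k
    fin_cases k <;> simp

def bQ (b : Bool) : ℤ := if b then -3 else 3

def bs (b : Fin 5 → Bool) : Z6 := (3, bQ (b 0), bQ (b 1), bQ (b 2), bQ (b 3), bQ (b 4))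

def rList : List Z6 := [
  (0, 6, 6, 0, 0, 0),
  (0, 6, -6, 0, 0, 0),
  (0, 6, 0, 6, 0, 0),
  (0, 6, 0, -6, 0, 0),
  (0, 6, 0, 0, 6, 0),
  (0, 6, 0, 0, -6, 0),
  (0, 6, 0, 0, 0, 6),
  (0, 6, 0, 0, 0, -6),
  (0, 0, 6, 6, 0, 0),
  (0, 0, 6, -6, 0, 0),
  (0, 0, 6, 0, 6, 0),
  (0, 0, 6, 0, -6, 0),
  (0, 0, 6, 0, 0, 6),
  (0, 0, 6, 0, 0, -6),
  (0, 0, 0, 6, 6, 0),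
  (0, 0, 0, 6, -6, 0),
  (0, 0, 0, 6, 0, 6),
  (0, 0, 0, 6, 0, -6),
  (0, 0, 0, 0, 6, 6),
  (0, 0, 0, 0, 6, -6),
  (3, 3, 3, 3, 3, 3),
  (3, 3, 3, 3, -3, -3),
  (3, 3, 3, -3, 3, -3),
  (3, 3, 3, -3, -3, 3),
  (3, 3, -3, 3, 3, -3),
  (3, 3, -3, 3, -3, 3),
  (3, 3, -3, -3, 3, 3),
  (3, 3, -3, -3, -3, -3),
  (3, -3, 3, 3, 3, -3),
  (3, -3, 3, 3, -3, 3),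
  (3, -3, 3, -3, 3, 3),
  (3, -3, 3, -3, -3, -3),
  (3, -3, -3, 3, 3, 3),
  (3, -3, -3, 3, -3, -3),
  (3, -3, -3, -3, 3, -3),
  (3, -3, -3, -3, -3, 3)]

def wList : List Z6 := [
  (-2, -6, 0, 0, 0, 0),
  (-2, 0, -6, 0, 0, 0),
  (-2, 0, 0, -6, 0, 0),
  (-2, 0, 0, 0, -6, 0),
  (-2, 0, 0, 0, 0, -6),
  (-2, 0, 0, 0, 0, 6),
  (-2, 0, 0, 0, 6, 0),
  (-2, 0, 0, 6, 0, 0),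
  (-2, 0, 6, 0, 0, 0),
  (-2, 6, 0, 0, 0, 0),
  (1, -3, -3, -3, -3, -3),
  (1, -3, -3, -3, 3, 3),
  (1, -3, -3, 3, -3, 3),
  (1, -3, -3, 3, 3, -3),
  (1, -3, 3, -3, -3, 3),
  (1, -3, 3, -3, 3, -3),
  (1, -3, 3, 3, -3, -3),
  (1, -3, 3, 3, 3, 3),
  (1, 3, -3, -3, -3, 3),
  (1, 3, -3, -3, 3, -3),
  (1, 3, -3, 3, -3, -3),
  (1, 3, -3, 3, 3, 3),
  (1, 3, 3, -3, -3, -3),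
  (1, 3, 3, -3, 3, 3),
  (1, 3, 3, 3, -3, 3),
  (1, 3, 3, 3, 3, -3),
  (4, 0, 0, 0, 0, 0)]

set_option maxRecDepth 100000 in
lemma fact_rootnorm : ∀ r ∈ rList, zdot r r = 72 := by decide

set_option maxRecDepth 100000 in
lemma fact_self : ∀ x ∈ wList, zdot x x = 48 := by decide

set_option maxRecDepth 100000 in
lemma fact_pair : ∀ x ∈ wList, ∀ y ∈ wList, x = y ∨ zdot x y = 12 ∨ zdot x y = -24 := by
  decide

set_option maxRecDepth 1000000 in
lemma fact_refl : ∀ r ∈ rList, ∀ x ∈ wList, (36:ℤ) ∣ zdot x r ∧ zrefl r x ∈ wList := by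
  decide

set_option maxRecDepth 100000 in
lemma fact_qe : ∀ i j : Fin 6, 0 < (i:ℕ) → i < j →
    zadd (qe i) (qe j) ∈ rList ∧ zsub (qe i) (qe j) ∈ rList := by decide

set_option maxRecDepth 100000 in
lemma fact_spinor : ∀ b : Fin 5 → Bool,
    Even ((Finset.univ.filter (fun k => b k = true)).card) → bs b ∈ rList := by decide

set_option maxRecDepth 100000 in
lemma fact_mu : ((4,0,0,0,0,0) : Z6) ∈ wList := by decide

lemma phiPlus_rep : ∀ v ∈ PhiPlus, ∃ r ∈ rList, v = emb r := by
  rintro v (⟨i, j, hi, hij, hv⟩ | ⟨s, hs, hpar, rfl⟩)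
  · have hj : 0 < (j:ℕ) := lt_trans hi hij
    rcases hv with rfl | rfl
    · exact ⟨zadd (qe i) (qe j), (fact_qe i j hi hij).1,
        by rw [stdE_emb i hi, stdE_emb j hj, emb_add]⟩
    · exact ⟨zsub (qe i) (qe j), (fact_qe i j hi hij).2,
        by rw [stdE_emb i hi, stdE_emb j hj, emb_sub]⟩
  · classical
    set b : Fin 5 → Bool := fun k => if s k = -1 then true else false with hbd
    have hb : ∀ k, s k = if b k then (-1:ℝ) else 1 := by
      intro k
      by_cases h : s k = -1
      · simp [hbd, h]
      · have h1 : s k = 1 := (hs k).resolve_right h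
        simp [hbd, h, h1]
    have hcard : (Finset.univ.filter (fun k => b k = true)).card
        = (Finset.univ.filter (fun k => s k = -1)).card := by
      congr 1
      ext k
      simp only [Finset.mem_filter, Finset.mem_univ, true_and]
      rw [hb k]
      cases hk : b k <;> norm_num
    refine ⟨bs b, fact_spinor b (by rw [hcard]; exact hpar), ?_⟩
    have hvec : ∀ j : Fin 5,
        (![((bQ (b 0) : ℤ) : ℝ)/6, ((bQ (b 1) : ℤ) : ℝ)/6, ((bQ (b 2) : ℤ) : ℝ)/6,
           ((bQ (b 3) : ℤ) : ℝ)/6, ((bQ (b 4) : ℤ) : ℝ)/6]) j = ((bQ (b j) : ℤ) : ℝ)/6 := by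
      intro j
      fin_cases j <;> rfl
    simp only [emb, bs, toE]
    congr 1
    funext k
    refine Fin.cases ?_ (fun j => ?_) k
    · rw [Fin.cons_zero]
      simp
      ring
    · rw [Fin.cons_succ, hb j, Matrix.cons_val_succ, hvec j]
      cases hj : b j <;> simp [bQ] <;> norm_num

lemma phi_rep : ∀ v ∈ Phi, ∃ r ∈ rList, ∀ x : E6V, reflectIn v x = reflectIn (emb r) x := by
  rintro v (h | h)
  · obtain ⟨r, hr, rfl⟩ := phiPlus_rep v h
    exact ⟨r, hr, fun _ => rfl⟩
  · rw [Set.mem_neg] at h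
    obtain ⟨r, hr, hvr⟩ := phiPlus_rep (-v) h
    have hv : v = -(emb r) := by rw [← hvr, neg_neg]
    exact ⟨r, hr, fun x => by rw [hv, reflectIn_neg]⟩

def embW : Set E6V := {x | ∃ y ∈ wList, x = emb y}

lemma reflect_embW : ∀ v ∈ Phi, ∀ x ∈ embW, reflectIn v x ∈ embW := by
  rintro v hv x ⟨y, hy, rfl⟩
  obtain ⟨r, hr, hrw⟩ := phi_rep v hv
  rw [hrw, reflect_emb r y (fact_rootnorm r hr) (fact_refl r hr y hy).1]
  exact ⟨zrefl r y, (fact_refl r hr y hy).2, rfl⟩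

lemma mu_embW : muE6 ∈ embW := ⟨(4,0,0,0,0,0), fact_mu, mu_emb⟩

lemma sigma_sub : SigmaE6 ⊆ embW := by
  rintro x ((rfl | ⟨v, hv, rfl⟩) | ⟨v, hv, w, hw, rfl⟩)
  · exact mu_embW
  · exact reflect_embW v hv _ mu_embW
  · exact reflect_embW v hv _ (reflect_embW w hw _ mu_embW)

lemma gram_indep_s7 (u v w : E6V)
    (h : (!![(inner ℝ u u : ℝ), inner ℝ u v, inner ℝ u w;
             inner ℝ v u, inner ℝ v v, inner ℝ v w;
             inner ℝ w u, inner ℝ w v, inner ℝ w w]).det ≠ 0) :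
    LinearIndependent ℝ ![u, v, w] := by
  rw [Fintype.linearIndependent_iff]
  intro g hg
  have h0 : g 0 • u + g 1 • v + g 2 • w = 0 := by
    have := hg
    rwa [Fin.sum_univ_three] at this
  have hi : ∀ z : E6V,
      (inner ℝ z u : ℝ) * g 0 + (inner ℝ z v : ℝ) * g 1 + (inner ℝ z w : ℝ) * g 2 = 0 := by
    intro z
    have hz0 : (inner ℝ z (g 0 • u + g 1 • v + g 2 • w) : ℝ) = 0 := by
      rw [h0, inner_zero_right]
    rw [inner_add_right, inner_add_right, real_inner_smul_right, real_inner_smul_right,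
      real_inner_smul_right] at hz0
    linarith
  have hmv : (!![(inner ℝ u u : ℝ), inner ℝ u v, inner ℝ u w;
             inner ℝ v u, inner ℝ v v, inner ℝ v w;
             inner ℝ w u, inner ℝ w v, inner ℝ w w]).mulVec g = 0 := by
    simp only [Matrix.cons_mulVec, Matrix.empty_mulVec, Matrix.cons_dotProduct,
      Matrix.dotProduct_of_isEmpty, add_zero, Matrix.cons_eq_zero_iff, Matrix.vecHead,
      Matrix.vecTail, Function.comp_apply, Fin.succ_zero_eq_one, Fin.succ_one_eq_two]
    refine ⟨?_, ?_, ?_, Subsingleton.elim _ _⟩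
    · linarith [hi u]
    · linarith [hi v]
    · linarith [hi w]
  have hz := Matrix.eq_zero_of_mulVec_eq_zero h hmv
  intro i
  rw [hz]
  rfl

lemma triple_neg (x y z : E6V)
    (hx : (inner ℝ x x : ℝ) = 4/3) (hy : (inner ℝ y y : ℝ) = 4/3) (hz : (inner ℝ z z : ℝ) = 4/3)
    (hxy : (inner ℝ x y : ℝ) = 1/3 ∨ (inner ℝ x y : ℝ) = -2/3)
    (hxz : (inner ℝ x z : ℝ) = 1/3 ∨ (inner ℝ x z : ℝ) = -2/3)
    (hyz : (inner ℝ y z : ℝ) = 1/3 ∨ (inner ℝ y z : ℝ) = -2/3)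
    (hdep : ¬ LinearIndependent ℝ ![x, y, z]) :
    (inner ℝ x y : ℝ) = -2/3 ∧ (inner ℝ x z : ℝ) = -2/3 ∧ (inner ℝ y z : ℝ) = -2/3 := by
  rcases hxy with h1 | h1 <;> rcases hxz with h2 | h2 <;> rcases hyz with h3 | h3 <;>
    first
      | exact ⟨h1, h2, h3⟩
      | (exfalso
         apply hdep
         apply gram_indep_s7
         rw [real_inner_comm x y, real_inner_comm x z, real_inner_comm y z,
           hx, hy, hz, h1, h2, h3, Matrix.det_fin_three]
         norm_num [Matrix.vecHead, Matrix.vecTail, Matrix.cons_val_one, Matrix.cons_val_two])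

/-- Any subset of `Σ` with at least 4 elements spans a subspace of `ℝ⁶`
of dimension at least 3. -/
theorem e6_sigma_four_points_rank_three :
    ∀ s ⊆ SigmaE6, 4 ≤ s.ncard →
      3 ≤ Module.finrank ℝ (Submodule.span ℝ s) := by
  intro s hsub hcard
  classical
  by_contra hlt
  push_neg at hlt
  -- any three elements of s are linearly dependent
  have hdep : ∀ x y z : E6V, x ∈ s → y ∈ s → z ∈ s → ¬ LinearIndependent ℝ ![x, y, z] := by
    intro x y z hx hy hz hind
    have hsubr : Set.range ![x, y, z] ⊆ s := by
      rintro _ ⟨i, rfl⟩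
      fin_cases i <;> simpa
    have h3 : Module.finrank ℝ (Submodule.span ℝ (Set.range ![x, y, z])) = 3 := by
      rw [finrank_span_eq_card hind]
      simp
    have hle := Submodule.finrank_mono (M := E6V) (Submodule.span_mono (R := ℝ) hsubr)
    omega
  -- extract four distinct elements of s
  obtain ⟨t, hts, htc⟩ := Set.exists_subset_card_eq hcard
  have htfin : t.Finite := Set.finite_of_ncard_ne_zero (by omega)
  have htc4 : htfin.toFinset.card = 4 := by
    rw [← Set.ncard_eq_toFinset_card _ htfin]
    exact htc
  rw [show (4:ℕ) = 3+1 from rfl, Finset.card_eq_succ] at htc4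
  obtain ⟨a, t3, hat, hins, hc3⟩ := htc4
  rw [Finset.card_eq_three] at hc3
  obtain ⟨b, c, d, hbc, hbd, hcd, rfl⟩ := hc3
  have hab : a ≠ b := by rintro rfl; exact hat (by simp)
  have hac : a ≠ c := by rintro rfl; exact hat (by simp)
  have had : a ≠ d := by rintro rfl; exact hat (by simp)
  have hmem : ∀ x ∈ insert a ({b, c, d} : Finset E6V), x ∈ s := by
    intro x hx
    apply hts
    rw [← Set.Finite.mem_toFinset htfin, ← hins]
    exact hx
  have has : a ∈ s := hmem a (by simp)
  have hbs : b ∈ s := hmem b (by simp)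
  have hcs : c ∈ s := hmem c (by simp)
  have hds : d ∈ s := hmem d (by simp)
  -- each element comes from the integer model
  obtain ⟨ya, hya, hea⟩ := sigma_sub (hsub has)
  obtain ⟨yb, hyb, heb⟩ := sigma_sub (hsub hbs)
  obtain ⟨yc, hyc, hec⟩ := sigma_sub (hsub hcs)
  obtain ⟨yd, hyd, hed⟩ := sigma_sub (hsub hds)
  -- inner ℝ products
  have hpair : ∀ (u v : E6V) (yu yv : Z6), u ≠ v → yu ∈ wList → yv ∈ wList →
      u = emb yu → v = emb yv →
      (inner ℝ u v : ℝ) = 1/3 ∨ (inner ℝ u v : ℝ) = -2/3 := by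
    intro u v yu yv huv hyu hyv hu hv
    have := (fact_pair yu hyu yv hyv).resolve_left (by
      intro h
      exact huv (by rw [hu, hv, h]))
    rcases this with h | h
    · left; rw [hu, hv, inner_emb, h]; norm_num
    · right; rw [hu, hv, inner_emb, h]; norm_num
  have hself : ∀ (u : E6V) (yu : Z6), yu ∈ wList → u = emb yu → (inner ℝ u u : ℝ) = 4/3 := by
    intro u yu hyu hu
    rw [hu, inner_emb, fact_self yu hyu]
    norm_num
  have haa := hself a ya hya hea
  have hbb := hself b yb hyb heb
  have hcc := hself c yc hyc hec
  have hdd := hself d yd hyd hed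
  have t1 := triple_neg a b c haa hbb hcc
    (hpair a b ya yb hab hya hyb hea heb)
    (hpair a c ya yc hac hya hyc hea hec)
    (hpair b c yb yc hbc hyb hyc heb hec)
    (hdep a b c has hbs hcs)
  have t2 := triple_neg a b d haa hbb hdd
    (hpair a b ya yb hab hya hyb hea heb)
    (hpair a d ya yd had hya hyd hea hed)
    (hpair b d yb yd hbd hyb hyd heb hed)
    (hdep a b d has hbs hds)
  have t3 := triple_neg a c d haa hcc hdd
    (hpair a c ya yc hac hya hyc hea hec)
    (hpair a d ya yd had hya hyd hea hed)
    (hpair c d yc yd hcd hyc hyd hec hed)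
    (hdep a c d has hcs hds)
  obtain ⟨hab2, hac2, hbc2⟩ := t1
  obtain ⟨-, had2, hbd2⟩ := t2
  obtain ⟨-, -, hcd2⟩ := t3
  have hba2 : (inner ℝ b a : ℝ) = -2/3 := by rw [real_inner_comm]; exact hab2
  have hca2 : (inner ℝ c a : ℝ) = -2/3 := by rw [real_inner_comm]; exact hac2
  have hda2 : (inner ℝ d a : ℝ) = -2/3 := by rw [real_inner_comm]; exact had2
  have hcb2 : (inner ℝ c b : ℝ) = -2/3 := by rw [real_inner_comm]; exact hbc2
  have hdb2 : (inner ℝ d b : ℝ) = -2/3 := by rw [real_inner_comm]; exact hbd2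
  have hdc2 : (inner ℝ d c : ℝ) = -2/3 := by rw [real_inner_comm]; exact hcd2
  have hnn : (0:ℝ) ≤ inner ℝ (a + b + c + d) (a + b + c + d) :=
    real_inner_self_nonneg
  simp only [inner_add_left, inner_add_right] at hnn
  rw [haa, hbb, hcc, hdd, hab2, hac2, had2, hba2, hbc2, hbd2, hca2, hcb2, hcd2,
    hda2, hdb2, hdc2] at hnn
  norm_num at hnn

end
end

section
/- Let G be a finite group acting on a finite set X whose cardinality is a power of a prime p, and let P be a Sylow p-subgroup of G. Then G acts transitively on X if and only if P acts transitively on X. -/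
/-- A finite group `G` acting on a finite set `X` of `p`-power cardinality acts
transitively if and only if a Sylow `p`-subgroup `P` of `G` acts transitively. -/
theorem isPretransitive_iff_sylow (G : Type*) [Group G] [Finite G]
    (X : Type*) [Finite X] [MulAction G X]
    (p : ℕ) [Fact p.Prime] (k : ℕ) (hX : Nat.card X = p ^ k)
    (P : Sylow p G) :
    MulAction.IsPretransitive G X ↔ MulAction.IsPretransitive (P : Subgroup G) X := by
  constructor
  · intro h
    constructor
    intro x y
    suffices horb : MulAction.orbit (P : Subgroup G) x = Set.univ by
      have hy : y ∈ MulAction.orbit (P : Subgroup G) x := horb ▸ Set.mem_univ y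
      exact hy
    -- counting argument
    have hstab : (MulAction.stabilizer G x).index = p ^ k := by
      rw [MulAction.index_stabilizer_of_transitive, hX]
    have hsub : MulAction.stabilizer (P : Subgroup G) x
        = (MulAction.stabilizer G x).subgroupOf P := by
      ext g
      simp [Subgroup.mem_subgroupOf, MulAction.mem_stabilizer_iff, Subgroup.smul_def]
    have hrel : (MulAction.stabilizer (P : Subgroup G) x).index
        = (MulAction.stabilizer G x).relIndex P := by
      rw [hsub]; rfl
    have hdvd : p ^ k ∣ (MulAction.stabilizer G x).relIndex P * (P : Subgroup G).index := by
      rw [← hstab]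
      have h1 : ((MulAction.stabilizer G x) ⊓ P).relIndex P * (P : Subgroup G).index
          = ((MulAction.stabilizer G x) ⊓ P).index :=
        Subgroup.relIndex_mul_index inf_le_right
      rw [← Subgroup.inf_relIndex_right, h1]
      exact Subgroup.index_dvd_of_le inf_le_left
    have hcop : Nat.Coprime (p ^ k) (P : Subgroup G).index := by
      apply Nat.Coprime.pow_left
      exact (Nat.Prime.coprime_iff_not_dvd Fact.out).mpr P.not_dvd_index
    have hdvd2 : p ^ k ∣ (MulAction.stabilizer (P : Subgroup G) x).index := by
      rw [hrel]
      exact (Nat.Coprime.dvd_of_dvd_mul_right hcop hdvd)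
    have hcard : (MulAction.orbit (P : Subgroup G) x).ncard = p ^ k := by
      have h1 : (MulAction.stabilizer (P : Subgroup G) x).index
          = (MulAction.orbit (P : Subgroup G) x).ncard :=
        MulAction.index_stabilizer _ x
      have hle : (MulAction.orbit (P : Subgroup G) x).ncard ≤ p ^ k := by
        rw [← hX, ← Set.ncard_univ]
        exact Set.ncard_le_ncard (Set.subset_univ _) Set.finite_univ
      have hpos : 0 < (MulAction.orbit (P : Subgroup G) x).ncard := by
        apply Set.ncard_pos (Set.toFinite _) |>.mpr
        exact ⟨x, MulAction.mem_orbit_self x⟩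
      have := Nat.le_of_dvd hpos (h1 ▸ hdvd2)
      omega
    apply Set.eq_of_subset_of_ncard_le (Set.subset_univ _)
    rw [Set.ncard_univ, hX, hcard]
  · intro h
    constructor
    intro x y
    obtain ⟨g, hg⟩ := h.exists_smul_eq x y
    exact ⟨g, hg⟩
end
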